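/- Suppose e: [t₀, ∞) → R^q satisfies e(t₀) = 0 and ||e(t)|| ≤ δ(t - t₀) for all t ≥ t₀ with δ > 0, and suppose the triggering threshold function θ(t) = c₁ + c₂ e^{-ιt} with c₁ ≥ 0, c₂ > 0, ι > 0. Then the first time t* > t₀ at which ||e(t*)|| ≥ θ(t*) satisfies t* - t₀ > 0; specifically δ(t* - t₀) ≥ c₂ e^{-ιt*} > 0, so consecutive triggering times are separated by a strictly positive amount (no Zeno behavior). -/
import Mathlib

theorem stmt13 {q : ℕ} (e : ℝ → EuclideanSpace ℝ (Fin q)) (t0 δ c1 c2 ι tstar : ℝ)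
    (hδ : 0 < δ) (hc1 : 0 ≤ c1) (hc2 : 0 < c2) (hι : 0 < ι)
    (he0 : e t0 = 0) (hbound : ∀ t, t0 ≤ t → ‖e t‖ ≤ δ * (t - t0))
    (ht : t0 ≤ tstar) (htrig : c1 + c2 * Real.exp (-ι * tstar) ≤ ‖e tstar‖) :
    c2 * Real.exp (-ι * tstar) ≤ δ * (tstar - t0) ∧
      0 < c2 * Real.exp (-ι * tstar) ∧ t0 < tstar := by
  have hpos : 0 < c2 * Real.exp (-ι * tstar) :=
    mul_pos hc2 (Real.exp_pos _)
  have h1 : c2 * Real.exp (-ι * tstar) ≤ δ * (tstar - t0) := by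
    have := hbound tstar ht
    linarith
  refine ⟨h1, hpos, ?_⟩
  by_contra h
  push_neg at h
  have : tstar = t0 := le_antisymm h ht
  rw [this] at h1
  nlinarith [Real.exp_pos (-ι * t0)]
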